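/- Suppose W = W₁ ⊕ ⋯ ⊕ W_k is a direct sum of pairwise B-orthogonal ρ-invariant subspaces such that B restricted to each Wᵢ is nondegenerate, Γ acts irreducibly on each Wᵢ, and the Wᵢ are pairwise non-isomorphic as representations of Γ. Then any two similitudes g, h of B that commute with ρ(γ) for all γ ∈ Γ commute with each other, and every such similitude g with factor c satisfies g² = c·id_W; in particular the group of such similitudes is commutative and, modulo nonzero scalar multiples of the identity, every element has order dividing 2. -/

import Mathlib

section AuxProj

variable {W : Type*} [AddCommGroup W] [Module ℂ W] {k : ℕ} {Wi : Fin k → Submodule ℂ W}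

/-- The projection onto the `j`-th summand of an internal direct sum, viewed as an
endomorphism of `W`. -/
noncomputable def auxProj (hint : DirectSum.IsInternal Wi) (j : Fin k) : W →ₗ[ℂ] W :=
  (Wi j).subtype ∘ₗ (DirectSum.component ℂ (Fin k) (fun i => Wi i) j) ∘ₗ
    (LinearEquiv.ofBijective (DirectSum.coeLinearMap Wi) hint).symm.toLinearMap

lemma auxProj_apply (hint : DirectSum.IsInternal Wi) (j : Fin k) (x : W) :
    auxProj hint j x
      = (((LinearEquiv.ofBijective (DirectSum.coeLinearMap Wi) hint).symm x) j : W) := rfl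

lemma auxProj_mem (hint : DirectSum.IsInternal Wi) (j : Fin k) (x : W) :
    auxProj hint j x ∈ Wi j := by
  rw [auxProj_apply]; exact SetLike.coe_mem _

lemma auxProj_eq_self (hint : DirectSum.IsInternal Wi) {j : Fin k} {x : W} (hx : x ∈ Wi j) :
    auxProj hint j x = x := by
  rw [auxProj_apply, hint.ofBijective_coeLinearMap_of_mem hx]

lemma auxProj_eq_zero (hint : DirectSum.IsInternal Wi) {l j : Fin k} (hlj : l ≠ j) {x : W}
    (hx : x ∈ Wi l) : auxProj hint j x = 0 := by
  rw [auxProj_apply, hint.ofBijective_coeLinearMap_of_mem_ne hlj hx, Submodule.coe_zero]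

lemma auxProj_sum (hint : DirectSum.IsInternal Wi) (x : W) :
    ∑ j, auxProj hint j x = x := by
  set e := LinearEquiv.ofBijective (DirectSum.coeLinearMap Wi) hint with he
  have h1 : ∀ j, auxProj hint j x
      = DirectSum.coeLinearMap Wi (DirectSum.of (fun i => Wi i) j ((e.symm x) j)) := by
    intro j
    rw [DirectSum.coeLinearMap_of, auxProj_apply]
  calc ∑ j, auxProj hint j x
      = ∑ j, DirectSum.coeLinearMap Wi (DirectSum.of (fun i => Wi i) j ((e.symm x) j)) :=
        Finset.sum_congr rfl (fun j _ => h1 j)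
    _ = DirectSum.coeLinearMap Wi (∑ j, DirectSum.of (fun i => Wi i) j ((e.symm x) j)) :=
        (map_sum _ _ _).symm
    _ = DirectSum.coeLinearMap Wi (e.symm x) := by rw [DirectSum.sum_univ_of]
    _ = e (e.symm x) := rfl
    _ = x := e.apply_symm_apply x

lemma auxProj_comm (hint : DirectSum.IsInternal Wi) (f : W →ₗ[ℂ] W)
    (hf : ∀ l : Fin k, ∀ x ∈ Wi l, f x ∈ Wi l) (j : Fin k) (x : W) :
    auxProj hint j (f x) = f (auxProj hint j x) := by
  conv_lhs => rw [← auxProj_sum hint x, map_sum, map_sum]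
  rw [Finset.sum_eq_single j]
  · exact auxProj_eq_self hint (hf j _ (auxProj_mem hint j x))
  · intro l _ hl
    exact auxProj_eq_zero hint hl (hf l _ (auxProj_mem hint l x))
  · intro h; exact absurd (Finset.mem_univ j) h

end AuxProj

/-- Let `W` be a finite-dimensional complex vector space, `B` a reflexive nondegenerate bilinear
form on `W`, and `ρ : Γ → GL(W)` acting by similitudes of `B`.  Suppose `W = W₁ ⊕ ⋯ ⊕ W_k` is a
direct sum of pairwise `B`-orthogonal `ρ`-invariant subspaces such that `B` restricted to each
`Wᵢ` is nondegenerate, `Γ` acts irreducibly on each `Wᵢ`, and the `Wᵢ` are pairwise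
non-isomorphic as representations of `Γ`.  Then any two similitudes of `B` commuting with all
`ρ(γ)` commute with each other, and every such similitude `g` with factor `c` satisfies
`g² = c·id_W`. -/
theorem centralizer_similitudes_commute_and_square_is_scalar
    {W : Type*} [AddCommGroup W] [Module ℂ W] [FiniteDimensional ℂ W]
    {Γ : Type*} [Group Γ]
    (B : LinearMap.BilinForm ℂ W)
    (hrefl : ∀ v w : W, B v w = 0 → B w v = 0)
    (hnd : ∀ v : W, (∀ w : W, B v w = 0) → v = 0)
    (ρ : Γ →* (W →ₗ[ℂ] W)ˣ)
    (c : Γ → ℂ) (hc : ∀ γ, c γ ≠ 0)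
    (hsim : ∀ γ : Γ, ∀ v w : W,
      B ((ρ γ : W →ₗ[ℂ] W) v) ((ρ γ : W →ₗ[ℂ] W) w) = c γ * B v w)
    (k : ℕ) (Wi : Fin k → Submodule ℂ W)
    (hinternal : DirectSum.IsInternal Wi)
    (horth : ∀ i j : Fin k, i ≠ j → ∀ v ∈ Wi i, ∀ w ∈ Wi j, B v w = 0)
    (hndi : ∀ i : Fin k, ∀ v ∈ Wi i, (∀ w ∈ Wi i, B v w = 0) → v = 0)
    (hinv : ∀ i : Fin k, ∀ γ : Γ, ∀ v ∈ Wi i, (ρ γ : W →ₗ[ℂ] W) v ∈ Wi i)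
    (hne : ∀ i : Fin k, Wi i ≠ ⊥)
    (hirr : ∀ i : Fin k, ∀ U : Submodule ℂ W, U ≤ Wi i →
      (∀ γ : Γ, ∀ u ∈ U, (ρ γ : W →ₗ[ℂ] W) u ∈ U) → U = ⊥ ∨ U = Wi i)
    (hnoniso : ∀ i j : Fin k, i ≠ j → ¬ ∃ T : W →ₗ[ℂ] W,
      (∀ x ∈ Wi i, T x ∈ Wi j) ∧
      (∀ γ : Γ, ∀ x ∈ Wi i, T ((ρ γ : W →ₗ[ℂ] W) x) = (ρ γ : W →ₗ[ℂ] W) (T x)) ∧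
      (∀ x ∈ Wi i, T x = 0 → x = 0) ∧
      (∀ y ∈ Wi j, ∃ x ∈ Wi i, T x = y)) :
    ∀ (g h : (W →ₗ[ℂ] W)ˣ) (cg ch : ℂ), cg ≠ 0 → ch ≠ 0 →
      (∀ v w : W, B ((g : W →ₗ[ℂ] W) v) ((g : W →ₗ[ℂ] W) w) = cg * B v w) →
      (∀ v w : W, B ((h : W →ₗ[ℂ] W) v) ((h : W →ₗ[ℂ] W) w) = ch * B v w) →
      (∀ γ : Γ,
        (g : W →ₗ[ℂ] W) ∘ₗ (ρ γ : W →ₗ[ℂ] W) = (ρ γ : W →ₗ[ℂ] W) ∘ₗ (g : W →ₗ[ℂ] W)) →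
      (∀ γ : Γ,
        (h : W →ₗ[ℂ] W) ∘ₗ (ρ γ : W →ₗ[ℂ] W) = (ρ γ : W →ₗ[ℂ] W) ∘ₗ (h : W →ₗ[ℂ] W)) →
      ((g : W →ₗ[ℂ] W) ∘ₗ (h : W →ₗ[ℂ] W) = (h : W →ₗ[ℂ] W) ∘ₗ (g : W →ₗ[ℂ] W)
        ∧ ∀ v : W, (g : W →ₗ[ℂ] W) ((g : W →ₗ[ℂ] W) v) = cg • v) := by
  -- extension principle: two maps agreeing on every `Wi i` are equal
  have hext : ∀ (f f' : W →ₗ[ℂ] W), (∀ i : Fin k, ∀ v ∈ Wi i, f v = f' v) → f = f' := by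
    intro f f' hff
    have htop : (⊤ : Submodule ℂ W) ≤ LinearMap.ker (f - f') := by
      rw [← hinternal.submodule_iSup_eq_top]
      apply iSup_le
      intro i v hv
      rw [LinearMap.mem_ker, LinearMap.sub_apply, sub_eq_zero]
      exact hff i v hv
    ext v
    have := htop (Submodule.mem_top : v ∈ (⊤ : Submodule ℂ W))
    rw [LinearMap.mem_ker, LinearMap.sub_apply, sub_eq_zero] at this
    exact this
  -- Key claim: any unit commuting with ρ is scalar on each Wi i
  have key : ∀ (g : (W →ₗ[ℂ] W)ˣ),
      (∀ γ : Γ, (g : W →ₗ[ℂ] W) ∘ₗ (ρ γ : W →ₗ[ℂ] W)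
        = (ρ γ : W →ₗ[ℂ] W) ∘ₗ (g : W →ₗ[ℂ] W)) →
      ∀ i : Fin k, ∃ lam : ℂ, ∀ v ∈ Wi i, (g : W →ₗ[ℂ] W) v = lam • v := by
    intro g hgρ i
    have hcomm : ∀ (γ : Γ) (v : W),
        (g : W →ₗ[ℂ] W) ((ρ γ : W →ₗ[ℂ] W) v) = (ρ γ : W →ₗ[ℂ] W) ((g : W →ₗ[ℂ] W) v) :=
      fun γ v => LinearMap.congr_fun (hgρ γ) v
    -- projections commute with ρ γ
    have hπρ : ∀ (j : Fin k) (γ : Γ) (x : W),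
        auxProj hinternal j ((ρ γ : W →ₗ[ℂ] W) x)
          = (ρ γ : W →ₗ[ℂ] W) (auxProj hinternal j x) :=
      fun j γ x => auxProj_comm hinternal _ (fun l y hy => hinv l γ y hy) j x
    -- Step 1: g maps Wi i into itself
    have hzero : ∀ j : Fin k, j ≠ i → ∀ v ∈ Wi i,
        auxProj hinternal j ((g : W →ₗ[ℂ] W) v) = 0 := by
      intro j hj
      by_contra hcon
      push_neg at hcon
      obtain ⟨v0, hv0mem, hv0⟩ := hcon
      set T : W →ₗ[ℂ] W := auxProj hinternal j ∘ₗ (g : W →ₗ[ℂ] W) with hT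
      have hTapp : ∀ x : W, T x = auxProj hinternal j ((g : W →ₗ[ℂ] W) x) := fun x => rfl
      have hTeq : ∀ (γ : Γ) (x : W),
          T ((ρ γ : W →ₗ[ℂ] W) x) = (ρ γ : W →ₗ[ℂ] W) (T x) := by
        intro γ x
        rw [hTapp, hTapp, hcomm, hπρ]
      -- kernel of T on Wi i
      have hker : ∀ x ∈ Wi i, T x = 0 → x = 0 := by
        intro x hxmem hx0
        set U : Submodule ℂ W := LinearMap.ker T ⊓ Wi i with hU
        have hUle : U ≤ Wi i := inf_le_right
        have hUinv : ∀ γ : Γ, ∀ u ∈ U, (ρ γ : W →ₗ[ℂ] W) u ∈ U := by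
          intro γ u hu
          obtain ⟨hu1, hu2⟩ := Submodule.mem_inf.mp hu
          refine Submodule.mem_inf.mpr ⟨?_, hinv i γ u hu2⟩
          rw [LinearMap.mem_ker, hTeq]
          rw [LinearMap.mem_ker] at hu1
          rw [hu1, map_zero]
        rcases hirr i U hUle hUinv with hbot | hfull
        · have : x ∈ U := Submodule.mem_inf.mpr ⟨by rwa [LinearMap.mem_ker], hxmem⟩
          rw [hbot] at this
          simpa using this
        · exfalso
          have : v0 ∈ U := hfull ▸ hv0mem
          exact hv0 (Submodule.mem_inf.mp this).1
      -- image of T on Wi i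
      have himg : ∀ y ∈ Wi j, ∃ x ∈ Wi i, T x = y := by
        intro y hy
        set V : Submodule ℂ W := Submodule.map T (Wi i) with hV
        have hVle : V ≤ Wi j := by
          rintro _ ⟨x, hx, rfl⟩
          exact auxProj_mem hinternal j _
        have hVinv : ∀ γ : Γ, ∀ u ∈ V, (ρ γ : W →ₗ[ℂ] W) u ∈ V := by
          rintro γ _ ⟨x, hx, rfl⟩
          exact ⟨(ρ γ : W →ₗ[ℂ] W) x, hinv i γ x hx, (hTeq γ x).symm ▸ rfl⟩
        rcases hirr j V hVle hVinv with hbot | hfull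
        · exfalso
          have : T v0 ∈ V := ⟨v0, hv0mem, rfl⟩
          rw [hbot] at this
          exact hv0 (by simpa [hTapp] using this)
        · have : y ∈ V := hfull ▸ hy
          obtain ⟨x, hx, hxy⟩ := this
          exact ⟨x, hx, hxy⟩
      exact hnoniso i j (Ne.symm hj)
        ⟨T, fun x _ => auxProj_mem hinternal j _, fun γ x _ => hTeq γ x, hker, himg⟩
    have hginv : ∀ v ∈ Wi i, (g : W →ₗ[ℂ] W) v ∈ Wi i := by
      intro v hv
      have hsum := auxProj_sum hinternal ((g : W →ₗ[ℂ] W) v)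
      rw [Finset.sum_eq_single i] at hsum
      · rw [← hsum]; exact auxProj_mem hinternal i _
      · intro j _ hj; exact hzero j hj v hv
      · intro hcon; exact absurd (Finset.mem_univ i) hcon
    -- Step 2: eigenvalue of g restricted to Wi i
    haveI : Nontrivial (Wi i) := Submodule.nontrivial_iff_ne_bot.mpr (hne i)
    set gi : (Wi i) →ₗ[ℂ] (Wi i) := LinearMap.restrict (g : W →ₗ[ℂ] W) hginv with hgi
    obtain ⟨lam, hlam⟩ := Module.End.exists_eigenvalue (gi : Module.End ℂ (Wi i))
    obtain ⟨vbar, hvbar⟩ := hlam.exists_hasEigenvector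
    have hvbareq : gi vbar = lam • vbar := Module.End.mem_eigenspace_iff.mp hvbar.1
    have hvbarne : (vbar : W) ≠ 0 := fun hz => hvbar.2 (Subtype.ext hz)
    have hgv : (g : W →ₗ[ℂ] W) (vbar : W) = lam • (vbar : W) := by
      have := congrArg (Subtype.val) hvbareq
      simpa [hgi, LinearMap.restrict_apply] using this
    -- Step 3: the lam-eigenspace within Wi i is invariant, hence all of Wi i
    refine ⟨lam, ?_⟩
    set U : Submodule ℂ W :=
      LinearMap.ker ((g : W →ₗ[ℂ] W) - lam • LinearMap.id) ⊓ Wi i with hU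
    have hmemU : ∀ x : W, x ∈ U ↔ ((g : W →ₗ[ℂ] W) x = lam • x ∧ x ∈ Wi i) := by
      intro x
      constructor
      · intro hx
        obtain ⟨h1, h2⟩ := Submodule.mem_inf.mp hx
        rw [LinearMap.mem_ker, LinearMap.sub_apply, LinearMap.smul_apply, LinearMap.id_apply,
          sub_eq_zero] at h1
        exact ⟨h1, h2⟩
      · rintro ⟨h1, h2⟩
        exact Submodule.mem_inf.mpr ⟨by rw [LinearMap.mem_ker, LinearMap.sub_apply,
          LinearMap.smul_apply, LinearMap.id_apply, sub_eq_zero]; exact h1, h2⟩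
    have hUle : U ≤ Wi i := inf_le_right
    have hUinv : ∀ γ : Γ, ∀ u ∈ U, (ρ γ : W →ₗ[ℂ] W) u ∈ U := by
      intro γ u hu
      rw [hmemU] at hu ⊢
      obtain ⟨h1, h2⟩ := hu
      refine ⟨?_, hinv i γ u h2⟩
      rw [hcomm, h1, map_smul]
    rcases hirr i U hUle hUinv with hbot | hfull
    · exfalso
      have : (vbar : W) ∈ U := (hmemU _).mpr ⟨hgv, vbar.2⟩
      rw [hbot] at this
      exact hvbarne (by simpa using this)
    · intro v hv
      have : v ∈ U := hfull ▸ hv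
      exact ((hmemU v).mp this).1
  -- now the main argument
  intro g h cg ch hcg hch hg hh hgρ hhρ
  choose lamg hlamg using key g hgρ
  choose lamh hlamh using key h hhρ
  constructor
  · apply hext
    intro i v hv
    have h1 : (g : W →ₗ[ℂ] W) ((h : W →ₗ[ℂ] W) v) = (lamh i * lamg i) • v := by
      rw [hlamh i v hv, map_smul, hlamg i v hv, smul_smul]
    have h2 : (h : W →ₗ[ℂ] W) ((g : W →ₗ[ℂ] W) v) = (lamg i * lamh i) • v := by
      rw [hlamg i v hv, map_smul, hlamh i v hv, smul_smul]
    rw [LinearMap.comp_apply, LinearMap.comp_apply, h1, h2, mul_comm]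
  · -- lamg i ^ 2 = cg on each block, then extend
    have hsq : ∀ i : Fin k, lamg i * lamg i = cg := by
      intro i
      obtain ⟨v, hvmem, hvne⟩ := Submodule.exists_mem_ne_zero_of_ne_bot (hne i)
      have : ¬ ∀ w ∈ Wi i, B v w = 0 := fun hall => hvne (hndi i v hvmem hall)
      push_neg at this
      obtain ⟨w, hwmem, hBvw⟩ := this
      have h1 := hg v w
      rw [hlamg i v hvmem, hlamg i w hwmem] at h1
      simp only [map_smul, LinearMap.smul_apply, smul_eq_mul] at h1
      have h2 : (lamg i * lamg i) * B v w = cg * B v w := by rw [mul_assoc]; exact h1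
      exact mul_right_cancel₀ hBvw h2
    have := hext ((g : W →ₗ[ℂ] W) ∘ₗ (g : W →ₗ[ℂ] W)) (cg • LinearMap.id) ?_
    · intro v
      have := LinearMap.congr_fun this v
      simpa using this
    · intro i v hv
      rw [LinearMap.comp_apply, hlamg i v hv, map_smul, hlamg i v hv, smul_smul]
      simp [hsq i]
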